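/- For a ∈ [1/2, 1), let J_a be the indicator function of the interval [a-1, a] and G_a(ν) = ∫_ℝ J_a(x) e^{-ν x} dx = (e^ν - 1)/ν · e^{-ν a} for ν ≠ 0, G_a(0) = 1. Then λ_a := inf_{ν ∈ ℝ} G_a(ν) is nonincreasing in a on [1/2, 1), λ_{1/2} = 1, and λ_a → 0 as a → 1⁻. -/

import Mathlib

open MeasureTheory Real Filter Set

private lemma coef_pos {ν : ℝ} (hν : ν ≠ 0) : 0 < (Real.exp ν - 1) / ν := by
  rcases lt_or_gt_of_ne hν with h | h
  · have h1 : Real.exp ν < 1 := Real.exp_lt_one_iff.mpr h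
    exact div_pos_of_neg_of_neg (by linarith) h
  · have h1 : 1 < Real.exp ν := by
      have := Real.exp_lt_exp.mpr h
      simpa using this
    exact div_pos (by linarith) h

private lemma G_pos (a ν : ℝ) :
    0 < (if ν = 0 then (1:ℝ) else (Real.exp ν - 1) / ν * Real.exp (-ν * a)) := by
  by_cases h : ν = 0
  · simp [h]
  · simp only [if_neg h]
    exact mul_pos (coef_pos h) (Real.exp_pos _)

private lemma G_bdd (a : ℝ) : BddBelow (Set.range fun ν : ℝ =>
    (if ν = 0 then (1:ℝ) else (Real.exp ν - 1) / ν * Real.exp (-ν * a))) := by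
  refine ⟨0, ?_⟩
  rintro x ⟨ν, rfl⟩
  exact (G_pos a ν).le

/-- symmetry/monotonicity key: `G a |ν| ≤ G a ν` for `a ≥ 1/2`. -/
private lemma G_abs_le {a : ℝ} (ha : 1/2 ≤ a) (ν : ℝ) :
    (if |ν| = 0 then (1:ℝ) else (Real.exp |ν| - 1) / |ν| * Real.exp (-|ν| * a))
      ≤ (if ν = 0 then (1:ℝ) else (Real.exp ν - 1) / ν * Real.exp (-ν * a)) := by
  rcases le_or_gt 0 ν with h | h
  · rw [abs_of_nonneg h]
  · have hν : ν ≠ 0 := h.ne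
    have habs : |ν| = -ν := abs_of_neg h
    rw [habs]
    have h0 : (-ν : ℝ) ≠ 0 := by simpa using hν
    simp only [if_neg h0, if_neg hν]
    set μ : ℝ := -ν with hμ
    have hμpos : 0 < μ := by simp [hμ]; linarith
    have hν' : ν = -μ := by simp [hμ]
    have e1 : Real.exp (-μ) * Real.exp μ = 1 := by rw [← Real.exp_add]; simp
    have e2 : Real.exp (μ * (a - 1)) = Real.exp (-μ) * Real.exp (μ * a) := by
      rw [← Real.exp_add]; ring_nf
    have hrhs : (Real.exp ν - 1) / ν * Real.exp (-ν * a)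
        = (Real.exp μ - 1) / μ * Real.exp (μ * (a - 1)) := by
      rw [hν', e2]
      simp only [neg_neg]
      rw [show Real.exp (-μ) - 1 = -(Real.exp (-μ) * (Real.exp μ - 1)) by nlinarith [e1],
        neg_div_neg_eq]
      ring
    rw [hrhs]
    apply mul_le_mul_of_nonneg_left _ (coef_pos hμpos.ne').le
    apply Real.exp_le_exp.mpr
    nlinarith

/-- `G` is antitone in `a` for `ν ≥ 0`. -/
private lemma G_anti {a b ν : ℝ} (hab : a ≤ b) (hν : 0 ≤ ν) :
    (if ν = 0 then (1:ℝ) else (Real.exp ν - 1) / ν * Real.exp (-ν * b))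
      ≤ (if ν = 0 then (1:ℝ) else (Real.exp ν - 1) / ν * Real.exp (-ν * a)) := by
  by_cases h : ν = 0
  · simp [h]
  · simp only [if_neg h]
    apply mul_le_mul_of_nonneg_left _ (coef_pos h).le
    apply Real.exp_le_exp.mpr
    nlinarith [lt_of_le_of_ne hν (Ne.symm h)]

theorem stmt6 :
    ∀ G : ℝ → ℝ → ℝ, (G = fun a ν =>
      if ν = 0 then 1 else (Real.exp ν - 1) / ν * Real.exp (-ν * a)) →
    ∀ lam : ℝ → ℝ, (lam = fun a => ⨅ ν : ℝ, G a ν) →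
      (∀ a ∈ Set.Ico (1/2 : ℝ) 1, ∀ ν : ℝ,
        G a ν = ∫ x in Set.Icc (a - 1) a, Real.exp (-ν * x)) ∧
      (∀ a ∈ Set.Ico (1/2 : ℝ) 1, ∀ b ∈ Set.Ico (1/2 : ℝ) 1, a ≤ b → lam b ≤ lam a) ∧
      lam (1/2) = 1 ∧
      Filter.Tendsto lam (nhdsWithin 1 (Set.Iio 1)) (nhds 0) := by
  intro G hG lam hlam
  subst hG hlam
  have lam_le : ∀ a ν : ℝ, (⨅ μ : ℝ, if μ = 0 then (1:ℝ)
      else (Real.exp μ - 1) / μ * Real.exp (-μ * a)) ≤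
      (if ν = 0 then (1:ℝ) else (Real.exp ν - 1) / ν * Real.exp (-ν * a)) :=
    fun a ν => ciInf_le (G_bdd a) ν
  refine ⟨?_, ?_, ?_, ?_⟩
  · -- integral formula
    intro a ha ν
    show (if ν = 0 then (1:ℝ) else (Real.exp ν - 1) / ν * Real.exp (-ν * a))
      = ∫ x in Set.Icc (a - 1) a, Real.exp (-ν * x)
    by_cases h : ν = 0
    · subst h
      rw [if_pos rfl]
      simp only [neg_zero, zero_mul, Real.exp_zero]
      rw [setIntegral_const, measureReal_def, Real.volume_Icc, smul_eq_mul, mul_one,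
        ENNReal.toReal_ofReal (by linarith)]
      ring
    · have hle : a - 1 ≤ a := by linarith
      have hderiv : ∀ x ∈ Set.uIcc (a-1) a, HasDerivAt
          (fun x : ℝ => -Real.exp (-ν * x) / ν) (Real.exp (-ν * x)) x := by
        intro x _
        have h1 : HasDerivAt (fun x : ℝ => -ν * x) (-ν) x := by
          simpa using (hasDerivAt_id x).const_mul (-ν)
        have h2 := (h1.exp.neg).div_const ν
        exact h2.congr_deriv (by field_simp)
      have hint : IntervalIntegrable (fun x : ℝ => Real.exp (-ν * x))
          volume (a-1) a :=
        (Real.continuous_exp.comp (continuous_const.mul continuous_id)).intervalIntegrable _ _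
      have hcalc := intervalIntegral.integral_eq_sub_of_hasDerivAt hderiv hint
      rw [MeasureTheory.integral_Icc_eq_integral_Ioc,
        ← intervalIntegral.integral_of_le hle, hcalc, if_neg h]
      have hsp : -ν * (a - 1) = -ν * a + ν := by ring
      rw [hsp, Real.exp_add]
      field_simp
      ring
  · -- monotone
    intro a ha b _ hab
    apply le_ciInf
    intro ν
    calc (⨅ μ : ℝ, if μ = 0 then (1:ℝ)
          else (Real.exp μ - 1) / μ * Real.exp (-μ * b)) ≤ _ := lam_le b |ν|
      _ ≤ (if |ν| = 0 then (1:ℝ) else (Real.exp |ν| - 1) / |ν| * Real.exp (-|ν| * a)) :=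
          G_anti hab (abs_nonneg ν)
      _ ≤ _ := G_abs_le ha.1 ν
  · -- lam (1/2) = 1
    show (⨅ ν : ℝ, if ν = 0 then (1:ℝ)
        else (Real.exp ν - 1) / ν * Real.exp (-ν * (1/2))) = 1
    apply le_antisymm
    · have h0 := lam_le (1/2) 0
      rwa [if_pos rfl] at h0
    · apply le_ciInf
      intro ν
      by_cases h : ν = 0
      · simp [h]
      · rw [if_neg h]
        have hs : Real.sinh (ν/2) = (Real.exp (ν/2) - Real.exp (-(ν/2)))/2 := Real.sinh_eq _
        have hexp : Real.exp ν = Real.exp (ν/2) * Real.exp (ν/2) := by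
          rw [← Real.exp_add]; ring_nf
        have hinv : Real.exp (-(ν/2)) * Real.exp (ν/2) = 1 := by
          rw [← Real.exp_add]; simp
        have harg : -ν * (1/2 : ℝ) = -(ν/2) := by ring
        rcases lt_or_gt_of_ne h with hneg | hpos
        · have hsl : Real.sinh (ν/2) < ν/2 := Real.sinh_lt_self_iff.mpr (by linarith)
          rw [hs] at hsl
          rw [harg, div_mul_eq_mul_div, le_div_iff_of_neg hneg]
          nlinarith [Real.exp_pos (ν/2), Real.exp_pos (-(ν/2))]
        · have hsl : ν/2 < Real.sinh (ν/2) := Real.self_lt_sinh_iff.mpr (by linarith)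
          rw [hs] at hsl
          rw [harg, div_mul_eq_mul_div, le_div_iff₀ hpos]
          nlinarith [Real.exp_pos (ν/2), Real.exp_pos (-(ν/2))]
  · -- tendsto 0
    rw [Metric.tendsto_nhdsWithin_nhds]
    intro ε hε
    set ν : ℝ := max 1 (3/ε) with hν
    have hν1 : (1:ℝ) ≤ ν := le_max_left _ _
    have hνpos : 0 < ν := lt_of_lt_of_le one_pos hν1
    have hν3 : 3/ε ≤ ν := le_max_right _ _
    refine ⟨Real.log 2 / ν, div_pos (Real.log_pos one_lt_two) hνpos, ?_⟩
    intro a _ hdist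
    rw [Real.dist_eq] at hdist ⊢
    have h1a : 1 - a < Real.log 2 / ν := by
      rw [abs_sub_lt_iff] at hdist; linarith [hdist.2]
    have hnonneg : 0 ≤ ⨅ μ : ℝ, (if μ = 0 then (1:ℝ)
        else (Real.exp μ - 1) / μ * Real.exp (-μ * a)) :=
      le_ciInf fun μ => (G_pos a μ).le
    show |(⨅ μ : ℝ, if μ = 0 then (1:ℝ)
        else (Real.exp μ - 1) / μ * Real.exp (-μ * a)) - 0| < ε
    rw [sub_zero, abs_of_nonneg hnonneg]
    have hεν : 3 ≤ ε * ν := by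
      have h := mul_le_mul_of_nonneg_left hν3 hε.le
      rwa [mul_div_cancel₀ _ hε.ne'] at h
    calc (⨅ μ : ℝ, if μ = 0 then (1:ℝ)
          else (Real.exp μ - 1) / μ * Real.exp (-μ * a)) ≤ _ := lam_le a ν
      _ = (Real.exp ν - 1) / ν * Real.exp (-ν * a) := by rw [if_neg hνpos.ne']
      _ ≤ Real.exp ν / ν * Real.exp (-ν * a) := by
          gcongr
          linarith [Real.exp_pos ν]
      _ = Real.exp (ν * (1 - a)) / ν := by
          rw [div_mul_eq_mul_div, ← Real.exp_add]; ring_nf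
      _ < 2 / ν := by
          gcongr
          have hlt : ν * (1 - a) < Real.log 2 := by
            have := (lt_div_iff₀ hνpos).mp h1a
            linarith [mul_comm (1 - a) ν ▸ this]
          calc Real.exp (ν * (1 - a)) < Real.exp (Real.log 2) := Real.exp_lt_exp.mpr hlt
            _ = 2 := Real.exp_log two_pos
      _ < ε := by
          rw [div_lt_iff₀ hνpos]
          nlinarith
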